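/- Let T > 0, 0 ≤ A < B ≤ T, C_H > 0 and C_τ > 0. Let H² : [0,T) → [0,∞) be Borel measurable with H²(u) ≥ C_H for all u ∈ [A,B). For each n ≥ 1 let 0 = t_0^n ≤ t_1^n ≤ ⋯ ≤ t_n^n = T be a partition of [0,T] with mesh sup_{1 ≤ i ≤ n}(t_i^n − t_{i-1}^n) ≤ C_τ/n, and set I_n := {i ∈ {1,…,n} : A ≤ t_{i-1}^n and t_i^n ≤ B}. Then liminf_{n→∞} n · ∑_{i ∈ I_n} ∫_{t_{i-1}^n}^{t_i^n} (t_i^n − t) H²(t) dt ≥ C_H (B − A)²/2. -/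

import Mathlib

open MeasureTheory Real Filter

open scoped Classical ENNReal

private lemma tele_sum (f : ℕ → ℝ) (a : ℕ) :
    ∀ b, a ≤ b → ∑ i ∈ Finset.Icc a b, (f i - f (i - 1)) = f b - f (a - 1) := by
  intro b
  induction b with
  | zero =>
    intro h
    interval_cases a
    simp
  | succ b ih =>
    intro h
    rcases Nat.lt_or_ge a (b + 1) with h' | h'
    · rw [Finset.sum_Icc_succ_top h, ih (Nat.lt_succ_iff.mp h')]
      simp only [Nat.add_sub_cancel]
      ring
    · have ha : a = b + 1 := le_antisymm h h'
      subst ha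
      simp

private lemma interval_lintegral_lb (C_H c d : ℝ) (hCH : 0 < C_H) (hcd : c ≤ d)
    (H2 : ℝ → ℝ) (hH2m : Measurable H2)
    (hlb : ∀ u ∈ Set.Ioc c d, C_H * (d - u) ≤ (d - u) * H2 u) :
    ENNReal.ofReal (C_H * (d - c) ^ 2 / 2) ≤
      ∫⁻ s in Set.Ioc c d, ENNReal.ofReal ((d - s) * H2 s) := by
  have hstep : (∫⁻ s in Set.Ioc c d, ENNReal.ofReal (C_H * (d - s))) ≤
      ∫⁻ s in Set.Ioc c d, ENNReal.ofReal ((d - s) * H2 s) := by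
    apply setLIntegral_mono
    · exact (ENNReal.measurable_ofReal.comp ((measurable_const.sub measurable_id).mul hH2m))
    · intro x hx
      exact ENNReal.ofReal_le_ofReal (hlb x hx)
  refine le_trans ?_ hstep
  have hint : IntegrableOn (fun s => C_H * (d - s)) (Set.Ioc c d) volume := by
    apply Continuous.integrableOn_Ioc
    continuity
  have hnn : 0 ≤ᵐ[volume.restrict (Set.Ioc c d)] fun s => C_H * (d - s) := by
    filter_upwards [ae_restrict_mem measurableSet_Ioc] with x hx
    simp only [Pi.zero_apply]
    nlinarith [hx.2]
  rw [← ofReal_integral_eq_lintegral_ofReal hint hnn]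
  apply ENNReal.ofReal_le_ofReal
  have : (∫ s in Set.Ioc c d, C_H * (d - s)) = ∫ s in c..d, C_H * (d - s) := by
    rw [intervalIntegral.integral_of_le hcd]
  rw [this]
  have h1 : (∫ s in c..d, C_H * (d - s)) = C_H * ∫ s in c..d, (d - s) := by
    exact intervalIntegral.integral_const_mul _ _
  have h2 : (∫ s in c..d, (d - s)) = (d - c) * d - (d ^ 2 - c ^ 2) / 2 := by
    rw [intervalIntegral.integral_sub intervalIntegrable_const
      (intervalIntegral.intervalIntegrable_id), integral_id]
    simp [mul_comm]
  rw [h1, h2]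
  nlinarith [sq_nonneg (d - c)]

/-- Lower-bound step in the proof of Theorem 3.1: if `H² ≥ C_H` on `[A,B)` and the
partitions `(t_i^n)_{i=0}^n` of `[0,T]` have mesh at most `C_τ/n`, then with
`I_n = {i : A ≤ t_{i-1}^n, t_i^n ≤ B}`,
`liminf_n n ∑_{i ∈ I_n} ∫_{t_{i-1}^n}^{t_i^n} (t_i^n - t) H²(t) dt ≥ C_H (B-A)²/2`. -/
theorem stmt10 (T A B C_H C_τ : ℝ) (hT : 0 < T) (hA : 0 ≤ A) (hAB : A < B) (hB : B ≤ T)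
    (hCH : 0 < C_H) (hCτ : 0 < C_τ)
    (H2 : ℝ → ℝ) (hH2m : Measurable H2)
    (hH2nonneg : ∀ u ∈ Set.Ico (0 : ℝ) T, 0 ≤ H2 u)
    (hH2lb : ∀ u ∈ Set.Ico A B, C_H ≤ H2 u)
    (t : ℕ → ℕ → ℝ)
    (ht0 : ∀ n : ℕ, 1 ≤ n → t n 0 = 0) (htn : ∀ n : ℕ, 1 ≤ n → t n n = T)
    (hmono : ∀ n : ℕ, 1 ≤ n → ∀ i j : ℕ, i ≤ j → j ≤ n → t n i ≤ t n j)
    (hmesh : ∀ n : ℕ, 1 ≤ n → ∀ i ∈ Finset.Icc 1 n, t n i - t n (i - 1) ≤ C_τ / n) :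
    ENNReal.ofReal (C_H * (B - A) ^ 2 / 2) ≤
      Filter.atTop.liminf (fun n : ℕ =>
        (n : ℝ≥0∞) *
          ∑ i ∈ (Finset.Icc 1 n).filter (fun i => A ≤ t n (i - 1) ∧ t n i ≤ B),
            ∫⁻ s in Set.Ioc (t n (i - 1)) (t n i),
              ENNReal.ofReal ((t n i - s) * H2 s)) := by
  -- the comparison sequence
  set g : ℕ → ℝ≥0∞ := fun n => ENNReal.ofReal (C_H * (B - A - 2 * C_τ / n) ^ 2 / 2) with hg
  -- eventual pointwise bound
  have hev : ∀ᶠ n : ℕ in atTop, g n ≤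
      (n : ℝ≥0∞) *
        ∑ i ∈ (Finset.Icc 1 n).filter (fun i => A ≤ t n (i - 1) ∧ t n i ≤ B),
          ∫⁻ s in Set.Ioc (t n (i - 1)) (t n i),
            ENNReal.ofReal ((t n i - s) * H2 s) := by
    have hN : ∀ᶠ n : ℕ in atTop, 1 ≤ n ∧ 2 * C_τ / n < B - A := by
      have h1 : ∀ᶠ n : ℕ in atTop, (1 : ℕ) ≤ n := eventually_ge_atTop 1
      have h2 : Tendsto (fun n : ℕ => 2 * C_τ / n) atTop (nhds 0) :=
        tendsto_const_div_atTop_nhds_zero_nat (2 * C_τ)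
      have h3 := h2.eventually_lt_const (by linarith : (0:ℝ) < B - A)
      filter_upwards [h1, h3] with n hn1 hn2 using ⟨hn1, hn2⟩
    filter_upwards [hN] with n hn
    obtain ⟨hn1, hn2⟩ := hn
    have hnpos : (0:ℝ) < n := by exact_mod_cast hn1
    have hmeshn := hmesh n hn1
    have hmonon := hmono n hn1
    set S := (Finset.Icc 1 n).filter (fun i => A ≤ t n (i - 1) ∧ t n i ≤ B) with hS
    -- S is nonempty
    have hCn : 0 < C_τ / n := div_pos hCτ hnpos
    have h2Cn : 2 * (C_τ / n) < B - A := by rw [mul_div_assoc] at hn2; exact hn2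
    -- the set of indices i with t n i ≤ B
    set Sb := (Finset.Icc 1 n).filter (fun i => t n i ≤ B) with hSb
    have hSbne : Sb.Nonempty := by
      refine ⟨1, Finset.mem_filter.2 ⟨Finset.mem_Icc.2 ⟨le_refl 1, hn1⟩, ?_⟩⟩
      have := hmeshn 1 (Finset.mem_Icc.2 ⟨le_refl 1, hn1⟩)
      simp only [Nat.sub_self] at this
      rw [ht0 n hn1] at this
      have : t n 1 ≤ C_τ / n := by linarith
      linarith
    set b := Sb.max' hSbne with hb
    have hbmem := Sb.max'_mem hSbne
    have hbIcc : b ∈ Finset.Icc 1 n := (Finset.mem_filter.1 hbmem).1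
    have hb1 : 1 ≤ b := (Finset.mem_Icc.1 hbIcc).1
    have hbn : b ≤ n := (Finset.mem_Icc.1 hbIcc).2
    have htbB : t n b ≤ B := (Finset.mem_filter.1 hbmem).2
    have htbge : B - C_τ / n ≤ t n b := by
      rcases eq_or_lt_of_le hbn with h | h
      · rw [h, htn n hn1]; linarith
      · have hb1n : b + 1 ∈ Finset.Icc 1 n := Finset.mem_Icc.2 ⟨by omega, h⟩
        have hnot : ¬ (t n (b + 1) ≤ B) := by
          intro hc
          have := Sb.le_max' (b + 1) (Finset.mem_filter.2 ⟨hb1n, hc⟩)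
          omega
        push_neg at hnot
        have := hmeshn (b + 1) hb1n
        simp only [Nat.add_sub_cancel] at this
        linarith
    have htb1ge : A ≤ t n (b - 1) := by
      have := hmeshn b hbIcc
      linarith
    have hbS : b ∈ S := Finset.mem_filter.2 ⟨hbIcc, htb1ge, htbB⟩
    have hSne : S.Nonempty := ⟨b, hbS⟩
    set a := S.min' hSne with ha
    set b' := S.max' hSne with hb'
    have hamem := S.min'_mem hSne
    have hb'mem := S.max'_mem hSne
    have haIcc : a ∈ Finset.Icc 1 n := (Finset.mem_filter.1 hamem).1
    have hb'Icc : b' ∈ Finset.Icc 1 n := (Finset.mem_filter.1 hb'mem).1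
    have ha1 : 1 ≤ a := (Finset.mem_Icc.1 haIcc).1
    have hb'n : b' ≤ n := (Finset.mem_Icc.1 hb'Icc).2
    have hab' : a ≤ b' := S.min'_le b' hb'mem
    -- t n (a-1) ≤ A + C_τ/n
    have hta1 : t n (a - 1) ≤ A + C_τ / n := by
      rcases eq_or_lt_of_le ha1 with h | h
      · rw [← h]
        simp only [Nat.sub_self]
        rw [ht0 n hn1]
        linarith
      · -- a ≥ 2, index a - 1 is in Icc 1 n but not in S
        have ha1Icc : a - 1 ∈ Finset.Icc 1 n :=
          Finset.mem_Icc.2 ⟨by omega, by omega⟩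
        have hnot : a - 1 ∉ S := by
          intro hc
          have := S.min'_le (a - 1) hc
          omega
        have htaB : t n (a - 1) ≤ B := by
          have := hmonon (a - 1) a (by omega) (Finset.mem_Icc.1 haIcc).2
          have := (Finset.mem_filter.1 hamem).2.2
          linarith
        have hfail : ¬ (A ≤ t n (a - 1 - 1)) := by
          intro hc
          exact hnot (Finset.mem_filter.2 ⟨ha1Icc, hc, htaB⟩)
        push_neg at hfail
        have := hmeshn (a - 1) ha1Icc
        linarith
    -- t n b' ≥ B - C_τ/n
    have htb' : B - C_τ / n ≤ t n b' := by
      have := hmonon b b' (S.le_max' b hbS) hb'n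
      linarith
    have htb'B : t n b' ≤ B := (Finset.mem_filter.1 hb'mem).2.2
    -- Icc a b' ⊆ S
    have hsub : Finset.Icc a b' ⊆ S := by
      intro i hi
      obtain ⟨hai, hib⟩ := Finset.mem_Icc.1 hi
      refine Finset.mem_filter.2 ⟨Finset.mem_Icc.2 ⟨le_trans ha1 hai, le_trans hib hb'n⟩, ?_, ?_⟩
      · exact le_trans (Finset.mem_filter.1 hamem).2.1
          (hmonon (a - 1) (i - 1) (by omega) (by omega))
      · exact le_trans (hmonon i b' hib hb'n) htb'B
    -- per-interval lower bound
    have hper : ∀ i ∈ S, ENNReal.ofReal (C_H * (t n i - t n (i - 1)) ^ 2 / 2) ≤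
        ∫⁻ s in Set.Ioc (t n (i - 1)) (t n i), ENNReal.ofReal ((t n i - s) * H2 s) := by
      intro i hi
      obtain ⟨hiIcc, hiA, hiB⟩ := Finset.mem_filter.1 hi
      obtain ⟨hi1, hin⟩ := Finset.mem_Icc.1 hiIcc
      have hcd : t n (i - 1) ≤ t n i := hmonon (i - 1) i (by omega) hin
      apply interval_lintegral_lb C_H _ _ hCH hcd H2 hH2m
      intro u hu
      obtain ⟨hu1, hu2⟩ := hu
      rcases eq_or_lt_of_le hu2 with h | h
      · rw [h]; simp
      · have huA : A ≤ u := le_trans hiA (le_of_lt hu1)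
        have huB : u < B := lt_of_lt_of_le h hiB
        have := hH2lb u ⟨huA, huB⟩
        have hd : 0 ≤ t n i - u := by linarith
        calc C_H * (t n i - u) ≤ H2 u * (t n i - u) :=
              mul_le_mul_of_nonneg_right this hd
          _ = (t n i - u) * H2 u := by ring
    -- now bound the sum
    calc g n ≤ (n : ℝ≥0∞) * ∑ i ∈ Finset.Icc a b',
          ENNReal.ofReal (C_H * (t n i - t n (i - 1)) ^ 2 / 2) := by
          rw [← ENNReal.ofReal_sum_of_nonneg (fun i _ => by positivity)]
          have hcast : (n : ℝ≥0∞) = ENNReal.ofReal (n : ℝ) := by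
            simp [ENNReal.ofReal_natCast]
          rw [hcast, ← ENNReal.ofReal_mul (by positivity)]
          apply ENNReal.ofReal_le_ofReal
          -- real inequality
          set Δ : ℕ → ℝ := fun i => t n i - t n (i - 1) with hΔ
          have hΔnn : ∀ i ∈ Finset.Icc a b', 0 ≤ Δ i := by
            intro i hi
            obtain ⟨hiIcc, _⟩ := Finset.mem_filter.1 (hsub hi)
            obtain ⟨hi1, hin⟩ := Finset.mem_Icc.1 hiIcc
            have := hmonon (i - 1) i (by omega) hin
            simp [hΔ]; linarith
          have hCS : (∑ i ∈ Finset.Icc a b', Δ i) ^ 2 ≤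
              (Finset.Icc a b').card * ∑ i ∈ Finset.Icc a b', Δ i ^ 2 :=
            sq_sum_le_card_mul_sum_sq
          have hcard : ((Finset.Icc a b').card : ℝ) ≤ n := by
            rw [Nat.card_Icc]
            have : b' + 1 - a ≤ n := by omega
            exact_mod_cast this
          have htel : (∑ i ∈ Finset.Icc a b', Δ i) = t n b' - t n (a - 1) :=
            tele_sum (t n) a b' hab'
          have hlow : B - A - 2 * (C_τ / n) ≤ ∑ i ∈ Finset.Icc a b', Δ i := by
            rw [htel]; linarith
          have hlow0 : 0 ≤ B - A - 2 * (C_τ / n) := by linarith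
          have hsq : (B - A - 2 * (C_τ / n)) ^ 2 ≤ (∑ i ∈ Finset.Icc a b', Δ i) ^ 2 :=
            pow_le_pow_left₀ hlow0 hlow 2
          have hsum2nn : 0 ≤ ∑ i ∈ Finset.Icc a b', Δ i ^ 2 :=
            Finset.sum_nonneg fun i _ => sq_nonneg _
          have hkey : (B - A - 2 * (C_τ / n)) ^ 2 ≤ n * ∑ i ∈ Finset.Icc a b', Δ i ^ 2 := by
            calc (B - A - 2 * (C_τ / n)) ^ 2 ≤ (∑ i ∈ Finset.Icc a b', Δ i) ^ 2 := hsq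
              _ ≤ (Finset.Icc a b').card * ∑ i ∈ Finset.Icc a b', Δ i ^ 2 := hCS
              _ ≤ n * ∑ i ∈ Finset.Icc a b', Δ i ^ 2 :=
                  mul_le_mul_of_nonneg_right hcard hsum2nn
          have hre : (∑ i ∈ Finset.Icc a b', C_H * Δ i ^ 2 / 2) =
              C_H / 2 * ∑ i ∈ Finset.Icc a b', Δ i ^ 2 := by
            rw [Finset.mul_sum]; apply Finset.sum_congr rfl; intro i _; ring
          have h2dv : 2 * C_τ / (n:ℝ) = 2 * (C_τ / n) := by ring
          rw [h2dv]
          calc C_H * (B - A - 2 * (C_τ / n)) ^ 2 / 2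
              ≤ C_H * (n * ∑ i ∈ Finset.Icc a b', Δ i ^ 2) / 2 := by
                apply div_le_div_of_nonneg_right _ (by norm_num)
                exact mul_le_mul_of_nonneg_left hkey (le_of_lt hCH)
            _ = (n : ℝ) * ∑ i ∈ Finset.Icc a b', C_H * Δ i ^ 2 / 2 := by
                rw [hre]; ring
      _ ≤ (n : ℝ≥0∞) * ∑ i ∈ S, ENNReal.ofReal (C_H * (t n i - t n (i - 1)) ^ 2 / 2) := by
          apply mul_le_mul_right
          exact Finset.sum_le_sum_of_subset hsub
      _ ≤ (n : ℝ≥0∞) * ∑ i ∈ S, ∫⁻ s in Set.Ioc (t n (i - 1)) (t n i),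
            ENNReal.ofReal ((t n i - s) * H2 s) := by
          apply mul_le_mul_right
          exact Finset.sum_le_sum hper
  -- liminf of g is the limit
  have hgtend : Tendsto g atTop (nhds (ENNReal.ofReal (C_H * (B - A) ^ 2 / 2))) := by
    apply (ENNReal.continuous_ofReal.tendsto _).comp
    have h1 : Tendsto (fun n : ℕ => 2 * C_τ / n) atTop (nhds 0) :=
      tendsto_const_div_atTop_nhds_zero_nat (2 * C_τ)
    have h2 : Tendsto (fun n : ℕ => B - A - 2 * C_τ / n) atTop (nhds (B - A)) := by
      have := tendsto_const_nhds (α := ℕ) (f := atTop) (x := B - A)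
      simpa using this.sub h1
    have h3 : Tendsto (fun n : ℕ => C_H * (B - A - 2 * C_τ / n) ^ 2 / 2) atTop
        (nhds (C_H * (B - A) ^ 2 / 2)) := by
      exact ((h2.pow 2).const_mul C_H).div_const 2
    exact h3
  calc ENNReal.ofReal (C_H * (B - A) ^ 2 / 2) = atTop.liminf g := (hgtend.liminf_eq).symm
    _ ≤ _ := liminf_le_liminf hev
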